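/- Let H be a quasi-Turaev π-coalgebra, α ∈ π, and let V be a left H_α-module equipped with a half-braiding c_{V,−}. Define ρ_{V,λ} : V → V ⊗ H_λ by ρ_{V,λ}(v) = c⁻¹_{V,H_λ}(^α1_λ ⊗ v), where H_λ is the left regular H_λ-module. Then ρ satisfies the quasi-coassociativity axiom (ii) of α-Yetter–Drinfeld modules: for all λ₁, λ₂ ∈ π and v ∈ V, (y²_α · v_{(0,0)})_{(0,0)} ⊗ (y²_α · v_{(0,0)})_{(1,λ₁)} y¹_{λ₁} ⊗ y³_{λ₂} v_{(1,λ₂)} = Φ⁻¹_{α,λ₁,λ₂} · [(ȳ³_α · v)_{(0,0)} ⊗ (ȳ³_α · v)_{(1,λ₁λ₂)(1,λ₁)} ȳ¹_{λ₁} ⊗ (ȳ³_α · v)_{(1,λ₁λ₂)(2,λ₂)} ȳ²_{λ₂}], where y¹ ⊗ y² ⊗ y³ = Φ⁻¹_{λ₁,α,λ₂} and ȳ¹ ⊗ ȳ² ⊗ ȳ³ = Φ⁻¹_{λ₁,λ₂,α}. -/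

import Mathlib

open scoped TensorProduct
open TensorProduct

universe u v
set_option maxHeartbeats 1000000

section QH
variable (k : Type u) [Field k] {π : Type v} [Group π]
variable (H : π → Type u) [∀ a, Ring (H a)] [∀ a, Algebra k (H a)]

/-- Transport along equality of group elements, as a `k`-linear map. -/
def castL {a b : π} (e : a = b) : H a →ₗ[k] H b := by subst e; exact LinearMap.id

/-- Transport along equality of group elements, as a `k`-algebra map. -/
def castA {a b : π} (e : a = b) : H a →ₐ[k] H b := by subst e; exact AlgHom.id k _

/-- A quasi-Hopf `π`-coalgebra (quasi-Turaev group coalgebra without the crossing):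
a family of `k`-algebras `{H α}` with comultiplications `Δ_{α,β}`, counit `ε`,
invertible associators `Φ_{α,β,γ}`, antipodes `S_α` and elements `p_α, q_α`. -/
structure QuasiHopfGCoalgebra where
  /-- comultiplication -/
  Δ : ∀ a b : π, H (a * b) →ₐ[k] (H a ⊗[k] H b)
  /-- counit -/
  ε : H 1 →ₐ[k] k
  /-- the associator `Φ_{α,β,γ} ∈ H_α ⊗ H_β ⊗ H_γ` -/
  Φ : ∀ a b c : π, H a ⊗[k] (H b ⊗[k] H c)
  /-- the inverse associator -/
  Φinv : ∀ a b c : π, H a ⊗[k] (H b ⊗[k] H c)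
  Φ_mul_Φinv : ∀ a b c : π, Φ a b c * Φinv a b c = 1
  Φinv_mul_Φ : ∀ a b c : π, Φinv a b c * Φ a b c = 1
  /-- the antipode, a family of bijective `k`-linear maps -/
  S : ∀ a : π, H a ≃ₗ[k] H a⁻¹
  S_one : ∀ a : π, S a 1 = 1
  /-- the antipode is anti-multiplicative -/
  S_mul : ∀ (a : π) (x y : H a), S a (x * y) = S a y * S a x
  p : ∀ a : π, H a
  q : ∀ a : π, H a
  /-- quasi-coassociativity:
  `(id ⊗ Δ_{β,γ})Δ_{α,βγ}(h) ⬝ Φ_{α,β,γ} = Φ_{α,β,γ} ⬝ (Δ_{α,β} ⊗ id)Δ_{αβ,γ}(h)` -/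
  coassoc : ∀ (a b c : π) (h : H (a * b * c)),
    (TensorProduct.map LinearMap.id (Δ b c).toLinearMap)
        ((Δ a (b * c)) (castL k H (mul_assoc a b c) h)) * Φ a b c
      = Φ a b c *
        (TensorProduct.assoc k (H a) (H b) (H c))
          ((TensorProduct.map (Δ a b).toLinearMap LinearMap.id) ((Δ (a * b) c) h))
  /-- right counit law `(id ⊗ ε)Δ_{α,1} = id` -/
  counit_right : ∀ (a : π) (h : H a),
    (TensorProduct.rid k (H a))
      ((TensorProduct.map LinearMap.id (ε : H 1 →ₗ[k] k))
        ((Δ a 1) (castL k H (mul_one a).symm h))) = h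
  /-- left counit law `(ε ⊗ id)Δ_{1,α} = id` -/
  counit_left : ∀ (a : π) (h : H a),
    (TensorProduct.lid k (H a))
      ((TensorProduct.map (ε : H 1 →ₗ[k] k) LinearMap.id)
        ((Δ 1 a) (castL k H (one_mul a).symm h))) = h
  /-- the pentagon identity -/
  pentagon : ∀ a b c d : π,
    ((1 : H a) ⊗ₜ[k] Φ b c d) *
      (TensorProduct.map LinearMap.id
          ((TensorProduct.assoc k (H b) (H c) (H d)).toLinearMap ∘ₗ
            TensorProduct.map (Δ b c).toLinearMap LinearMap.id)
        (Φ a (b * c) d)) *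
      ((TensorProduct.map LinearMap.id (TensorProduct.assoc k (H b) (H c) (H d)).toLinearMap)
        ((TensorProduct.assoc k (H a) (H b ⊗[k] H c) (H d)) ((Φ a b c) ⊗ₜ[k] (1 : H d))))
    = (TensorProduct.map LinearMap.id
          (TensorProduct.map LinearMap.id (Δ c d).toLinearMap) (Φ a b (c * d))) *
      ((TensorProduct.assoc k (H a) (H b) (H c ⊗[k] H d))
        ((TensorProduct.map (Δ a b).toLinearMap LinearMap.id) (Φ (a * b) c d)))
  /-- normalization `(id ⊗ ε ⊗ id)(Φ_{α,1,β}) = 1 ⊗ 1` -/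
  Φ_normal : ∀ a b : π,
    (TensorProduct.map LinearMap.id
      ((TensorProduct.lid k (H b)).toLinearMap ∘ₗ
        TensorProduct.map (ε : H 1 →ₗ[k] k) LinearMap.id) (Φ a 1 b)) = (1 : H a ⊗[k] H b)
  /-- `S_α(h₁) p_{α⁻¹} h₂ = ε(h) p_{α⁻¹}` for `h ∈ H_1` -/
  antipode_p : ∀ (a : π) (h : H 1),
    (LinearMap.mul' k (H a⁻¹) ∘ₗ
        TensorProduct.map (LinearMap.mulRight k (p a⁻¹) ∘ₗ (S a).toLinearMap) LinearMap.id)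
      ((Δ a a⁻¹) (castL k H (mul_inv_cancel a).symm h)) = ε h • p a⁻¹
  /-- `h₁ q_α S_{α⁻¹}(h₂) = ε(h) q_α` for `h ∈ H_1` -/
  antipode_q : ∀ (a : π) (h : H 1),
    (LinearMap.mul' k (H a) ∘ₗ
        TensorProduct.map (LinearMap.mulRight k (q a))
          (castL k H (inv_inv a) ∘ₗ (S a⁻¹).toLinearMap))
      ((Δ a a⁻¹) (castL k H (mul_inv_cancel a).symm h)) = ε h • q a
  /-- `Y¹_α q_α S_{α⁻¹}(Y²_{α⁻¹}) p_α Y³_α = 1_α` where `Φ_{α,α⁻¹,α} = Y¹ ⊗ Y² ⊗ Y³` -/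
  antipode_Φ : ∀ a : π,
    (LinearMap.mul' k (H a) ∘ₗ
      TensorProduct.map (LinearMap.mulRight k (q a))
        (LinearMap.mul' k (H a) ∘ₗ
          TensorProduct.map
            (LinearMap.mulRight k (p a) ∘ₗ castL k H (inv_inv a) ∘ₗ (S a⁻¹).toLinearMap)
            LinearMap.id))
      (Φ a a⁻¹ a) = 1
  /-- `S_{α⁻¹}(y¹_{α⁻¹}) p_α y²_α q_α S_{α⁻¹}(y³_{α⁻¹}) = 1_α`
  where `Φ⁻¹_{α⁻¹,α,α⁻¹} = y¹ ⊗ y² ⊗ y³` -/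
  antipode_Φinv : ∀ a : π,
    (LinearMap.mul' k (H a) ∘ₗ
      TensorProduct.map
        (LinearMap.mulRight k (p a) ∘ₗ castL k H (inv_inv a) ∘ₗ (S a⁻¹).toLinearMap)
        (LinearMap.mul' k (H a) ∘ₗ
          TensorProduct.map (LinearMap.mulRight k (q a))
            (castL k H (inv_inv a) ∘ₗ (S a⁻¹).toLinearMap)))
      (Φinv a⁻¹ a a⁻¹) = 1

namespace QuasiHopfGCoalgebra
variable {k H}
variable (T : QuasiHopfGCoalgebra k H)

/-- `I^R_{α,β} = y¹_α ⊗ y²_β q_β S_{β⁻¹}(y³_{β⁻¹})` where `Φ⁻¹_{α,β,β⁻¹} = y¹ ⊗ y² ⊗ y³` -/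
noncomputable def IR (a b : π) : H a ⊗[k] H b :=
  TensorProduct.map LinearMap.id
    (LinearMap.mul' k (H b) ∘ₗ
      TensorProduct.map (LinearMap.mulRight k (T.q b))
        (castL k H (inv_inv b) ∘ₗ (T.S b⁻¹).toLinearMap))
    (T.Φinv a b b⁻¹)

/-- `J^R_{α,β} = Y¹_α ⊗ S_β⁻¹(p_{β⁻¹} Y³_{β⁻¹}) Y²_β` where `Φ_{α,β,β⁻¹} = Y¹ ⊗ Y² ⊗ Y³` -/
noncomputable def JR (a b : π) : H a ⊗[k] H b :=
  TensorProduct.map LinearMap.id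
    (LinearMap.mul' k (H b) ∘ₗ
      TensorProduct.map ((T.S b).symm.toLinearMap ∘ₗ LinearMap.mulLeft k (T.p b⁻¹))
          LinearMap.id ∘ₗ
        (TensorProduct.comm k (H b) (H b⁻¹)).toLinearMap)
    (T.Φ a b b⁻¹)

/-- `I^L_{α,β} = Y²_α S_α⁻¹(Y¹_{α⁻¹} q_{α⁻¹}) ⊗ Y³_β` where `Φ_{α⁻¹,α,β} = Y¹ ⊗ Y² ⊗ Y³` -/
noncomputable def IL (a b : π) : H a ⊗[k] H b :=
  TensorProduct.map (LinearMap.mul' k (H a)) LinearMap.id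
    ((TensorProduct.assoc k (H a) (H a) (H b)).symm
      ((TensorProduct.leftComm k (H a) (H a) (H b))
        (TensorProduct.map ((T.S a).symm.toLinearMap ∘ₗ LinearMap.mulRight k (T.q a⁻¹))
          LinearMap.id (T.Φ a⁻¹ a b))))

/-- `J^L_{α,β} = S_{α⁻¹}(y¹_{α⁻¹}) p_α y²_α ⊗ y³_β` where `Φ⁻¹_{α⁻¹,α,β} = y¹ ⊗ y² ⊗ y³` -/
noncomputable def JL (a b : π) : H a ⊗[k] H b :=
  TensorProduct.map (LinearMap.mul' k (H a)) LinearMap.id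
    ((TensorProduct.assoc k (H a) (H a) (H b)).symm
      (TensorProduct.map
        (LinearMap.mulRight k (T.p a) ∘ₗ castL k H (inv_inv a) ∘ₗ (T.S a⁻¹).toLinearMap)
        LinearMap.id (T.Φinv a⁻¹ a b)))

/-- the map `x ⊗ y ↦ Δ_{α,β}(x) ⬝ I^R_{α,β} ⬝ (1_α ⊗ S_{β⁻¹}(y))` -/
noncomputable def lmapIR (a b : π) : (H (a * b) ⊗[k] H b⁻¹) →ₗ[k] (H a ⊗[k] H b) :=
  LinearMap.mul' k (H a ⊗[k] H b) ∘ₗ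
    TensorProduct.map
      (LinearMap.mulRight k (T.IR a b) ∘ₗ (T.Δ a b).toLinearMap)
      (TensorProduct.mk k (H a) (H b) 1 ∘ₗ castL k H (inv_inv b) ∘ₗ (T.S b⁻¹).toLinearMap)

/-- the map `x ⊗ y ↦ (1_α ⊗ S_β⁻¹(y)) ⬝ J^R_{α,β} ⬝ Δ_{α,β}(x)` -/
noncomputable def lmapJR (a b : π) : (H (a * b) ⊗[k] H b⁻¹) →ₗ[k] (H a ⊗[k] H b) :=
  LinearMap.mul' k (H a ⊗[k] H b) ∘ₗ
    TensorProduct.map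
      (TensorProduct.mk k (H a) (H b) 1 ∘ₗ (T.S b).symm.toLinearMap)
      (LinearMap.mulLeft k (T.JR a b) ∘ₗ (T.Δ a b).toLinearMap) ∘ₗ
    (TensorProduct.comm k (H (a * b)) (H b⁻¹)).toLinearMap

/-- the map `x ⊗ y ↦ Δ_{α,β}(y) ⬝ I^L_{α,β} ⬝ (S_α⁻¹(x) ⊗ 1_β)` -/
noncomputable def lmapIL (a b : π) : (H a⁻¹ ⊗[k] H (a * b)) →ₗ[k] (H a ⊗[k] H b) :=
  LinearMap.mul' k (H a ⊗[k] H b) ∘ₗ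
    TensorProduct.map
      (LinearMap.mulRight k (T.IL a b) ∘ₗ (T.Δ a b).toLinearMap)
      ((TensorProduct.mk k (H a) (H b)).flip 1 ∘ₗ (T.S a).symm.toLinearMap) ∘ₗ
    (TensorProduct.comm k (H a⁻¹) (H (a * b))).toLinearMap

/-- the map `x ⊗ y ↦ (S_{α⁻¹}(x) ⊗ 1_β) ⬝ J^L_{α,β} ⬝ Δ_{α,β}(y)` -/
noncomputable def lmapJL (a b : π) : (H a⁻¹ ⊗[k] H (a * b)) →ₗ[k] (H a ⊗[k] H b) :=
  LinearMap.mul' k (H a ⊗[k] H b) ∘ₗ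
    TensorProduct.map
      ((TensorProduct.mk k (H a) (H b)).flip 1 ∘ₗ
        castL k H (inv_inv a) ∘ₗ (T.S a⁻¹).toLinearMap)
      (LinearMap.mulLeft k (T.JL a b) ∘ₗ (T.Δ a b).toLinearMap)

end QuasiHopfGCoalgebra

/-- A quasi-Turaev `π`-coalgebra: a quasi-Hopf `π`-coalgebra together with a crossing
`φ_β : H_α → H_{βαβ⁻¹}`. -/
structure QuasiTuraevGCoalgebra extends QuasiHopfGCoalgebra k H where
  /-- the crossing -/
  φ : ∀ b a : π, H a ≃ₐ[k] H (b * a * b⁻¹)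
  /-- the crossing preserves the comultiplication -/
  φ_comul : ∀ (b a c : π) (h : H (a * c)),
    TensorProduct.map (φ b a).toLinearMap (φ b c).toLinearMap ((Δ a c) h)
      = (Δ (b * a * b⁻¹) (b * c * b⁻¹))
          (castL k H (by group) ((φ b (a * c)) h))
  /-- the crossing preserves the counit -/
  φ_counit : ∀ (b : π) (h : H 1),
    ε (castL k H (by group : b * 1 * b⁻¹ = 1) ((φ b 1) h)) = ε h
  /-- the crossing is multiplicative -/
  φ_mul : ∀ (b b' a : π) (h : H a),
    castL k H (by group : b * (b' * a * b'⁻¹) * b⁻¹ = (b * b') * a * (b * b')⁻¹)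
        ((φ b (b' * a * b'⁻¹)) ((φ b' a) h))
      = (φ (b * b') a) h
  /-- the associator is invariant under the crossing -/
  φ_Φ : ∀ e t v a b c : π,
    TensorProduct.map (φ e a).toLinearMap
        (TensorProduct.map (φ t b).toLinearMap (φ v c).toLinearMap) (Φ a b c)
      = Φ (e * a * e⁻¹) (t * b * t⁻¹) (v * c * v⁻¹)

end QH

section PMapComb
/- Combinators for "parameterized linear maps" `A →ₗ[k] (M →ₗ[k] N)`: these let us build
multilinear expressions compositionally. -/
variable {k : Type u} [Field k]
variable {A B M N M' N' P Q : Type u}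
variable [AddCommGroup A] [Module k A] [AddCommGroup B] [Module k B]
variable [AddCommGroup M] [Module k M] [AddCommGroup N] [Module k N]
variable [AddCommGroup M'] [Module k M'] [AddCommGroup N'] [Module k N']
variable [AddCommGroup P] [Module k P] [AddCommGroup Q] [Module k Q]

/-- tensor product of parameterized maps -/
noncomputable def pmapTens (f : A →ₗ[k] M →ₗ[k] N) (g : B →ₗ[k] M' →ₗ[k] N') :
    (A ⊗[k] B) →ₗ[k] (M ⊗[k] M') →ₗ[k] (N ⊗[k] N') :=
  TensorProduct.homTensorHomMap (RingHom.id k) M M' N N' ∘ₗ TensorProduct.map f g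

/-- composition of parameterized maps: `(pcomp f g) (a ⊗ b) = g b ∘ₗ f a` -/
noncomputable def pcomp (f : A →ₗ[k] M →ₗ[k] N) (g : B →ₗ[k] N →ₗ[k] P) :
    (A ⊗[k] B) →ₗ[k] M →ₗ[k] P :=
  TensorProduct.lift
    ((LinearMap.lcomp k (M →ₗ[k] P) g) ∘ₗ (LinearMap.llcomp k M N P).flip ∘ₗ f)

/-- postcompose a parameterized map with a fixed map -/
noncomputable def ppost (h : N →ₗ[k] P) (f : A →ₗ[k] M →ₗ[k] N) : A →ₗ[k] M →ₗ[k] P :=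
  (LinearMap.llcomp k M N P h) ∘ₗ f

/-- precompose a parameterized map with a fixed map -/
noncomputable def ppre (h : P →ₗ[k] M) (f : A →ₗ[k] M →ₗ[k] N) : A →ₗ[k] P →ₗ[k] N :=
  (LinearMap.lcomp k N h) ∘ₗ f

/-- reparameterize -/
noncomputable def pparam (σ : B →ₗ[k] A) (f : A →ₗ[k] M →ₗ[k] N) : B →ₗ[k] M →ₗ[k] N :=
  f ∘ₗ σ

/-- act on the left tensor factor -/
noncomputable def pleft (P : Type u) [AddCommGroup P] [Module k P]
    (f : A →ₗ[k] M →ₗ[k] N) : A →ₗ[k] (M ⊗[k] P) →ₗ[k] (N ⊗[k] P) :=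
  (LinearMap.rTensorHom P) ∘ₗ f

/-- act on the right tensor factor -/
noncomputable def pright (P : Type u) [AddCommGroup P] [Module k P]
    (f : A →ₗ[k] M →ₗ[k] N) : A →ₗ[k] (P ⊗[k] M) →ₗ[k] (P ⊗[k] N) :=
  (LinearMap.lTensorHom P) ∘ₗ f

end PMapComb

section Modules
variable {k : Type u} [Field k] {π : Type v} [Group π]
variable {H : π → Type u} [∀ a, Ring (H a)] [∀ a, Algebra k (H a)]
variable (T : QuasiTuraevGCoalgebra k H)

namespace QuasiTuraevGCoalgebra

/-- The `H_{αβ}`-module structure on the tensor product of an `H_α`-module and an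
`H_β`-module, through `Δ_{α,β}`. -/
noncomputable def tensAlg {a b : π} {M N : Type u}
    [AddCommGroup M] [Module k M] [AddCommGroup N] [Module k N]
    (ρ : H a →ₐ[k] Module.End k M) (σ : H b →ₐ[k] Module.End k N) :
    H (a * b) →ₐ[k] Module.End k (M ⊗[k] N) :=
  ((Module.endTensorEndAlgHom (R := k) (S := k) (A := k) (M := M) (N := N)).comp
      (Algebra.TensorProduct.map ρ σ)).comp (T.Δ a b)

/-- The conjugate module `^βX`: `X` with the `H_{βαβ⁻¹}`-action `h · x = φ_{β⁻¹}(h) · x`. -/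
noncomputable def conjAlg {a : π} {X : Type u} [AddCommGroup X] [Module k X]
    (ρ : H a →ₐ[k] Module.End k X) (b : π) :
    H (b * a * b⁻¹) →ₐ[k] Module.End k X :=
  (ρ.comp (castA k H (by group : b⁻¹ * (b * a * b⁻¹) * b⁻¹⁻¹ = a))).comp
    (T.φ b⁻¹ (b * a * b⁻¹)).toAlgHom

/-- Evaluation of an action: `H_α ⊗ X → X`. -/
noncomputable def aev {a : π} {X : Type u} [AddCommGroup X] [Module k X]
    (ρ : H a →ₐ[k] Module.End k X) : (H a ⊗[k] X) →ₗ[k] X :=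
  TensorProduct.lift ρ.toLinearMap

/-- The associativity constraint of `Rep(H)`: multiplication by `Φ_{α,β,γ}` composed with
the canonical vector space isomorphism. -/
noncomputable def assocMod {a b c : π} {M₁ M₂ M₃ : Type u}
    [AddCommGroup M₁] [Module k M₁] [AddCommGroup M₂] [Module k M₂]
    [AddCommGroup M₃] [Module k M₃]
    (ρ₁ : H a →ₐ[k] Module.End k M₁) (ρ₂ : H b →ₐ[k] Module.End k M₂)
    (ρ₃ : H c →ₐ[k] Module.End k M₃) :
    ((M₁ ⊗[k] M₂) ⊗[k] M₃) →ₗ[k] (M₁ ⊗[k] (M₂ ⊗[k] M₃)) :=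
  (pmapTens ρ₁.toLinearMap (pmapTens ρ₂.toLinearMap ρ₃.toLinearMap) (T.Φ a b c)) ∘ₗ
    (TensorProduct.assoc k M₁ M₂ M₃).toLinearMap

/-- The inverse associativity constraint of `Rep(H)`. -/
noncomputable def assocModInv {a b c : π} {M₁ M₂ M₃ : Type u}
    [AddCommGroup M₁] [Module k M₁] [AddCommGroup M₂] [Module k M₂]
    [AddCommGroup M₃] [Module k M₃]
    (ρ₁ : H a →ₐ[k] Module.End k M₁) (ρ₂ : H b →ₐ[k] Module.End k M₂)
    (ρ₃ : H c →ₐ[k] Module.End k M₃) :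
    (M₁ ⊗[k] (M₂ ⊗[k] M₃)) →ₗ[k] ((M₁ ⊗[k] M₂) ⊗[k] M₃) :=
  (TensorProduct.assoc k M₁ M₂ M₃).symm.toLinearMap ∘ₗ
    (pmapTens ρ₁.toLinearMap (pmapTens ρ₂.toLinearMap ρ₃.toLinearMap) (T.Φinv a b c))

end QuasiTuraevGCoalgebra
end Modules

section YD
variable {k : Type u} [Field k] {π : Type v} [Group π]
variable {H : π → Type u} [∀ a, Ring (H a)] [∀ a, Algebra k (H a)]

namespace QuasiTuraevGCoalgebra
variable (T : QuasiTuraevGCoalgebra k H)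
variable {a : π} {V : Type u} [AddCommGroup V] [Module k V]

/-- Counitarity `(id ⊗ ε) ∘ ρ_{V,1} = id` of a coaction family. -/
def ydCounitProp (coact : ∀ l : π, V →ₗ[k] V ⊗[k] H l) : Prop :=
  ∀ v : V,
    (TensorProduct.rid k V)
      ((TensorProduct.map LinearMap.id (T.ε : H 1 →ₗ[k] k)) (coact 1 v)) = v

/-- The left-hand side of the Yetter-Drinfeld quasi-coassociativity axiom, as a linear map:
`v ↦ (y²_α·v₍₀,₀₎)₍₀,₀₎ ⊗ ((y²_α·v₍₀,₀₎)₍₁,λ₁₎ y¹_{λ₁} ⊗ y³_{λ₂} v₍₁,λ₂₎)`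
where `y¹ ⊗ y² ⊗ y³ = Φ⁻¹_{λ₁,α,λ₂}`. -/
noncomputable def ydCoassocLHS (ρ : H a →ₐ[k] Module.End k V)
    (coact : ∀ l : π, V →ₗ[k] V ⊗[k] H l) (l₁ l₂ : π) :
    V →ₗ[k] V ⊗[k] (H l₁ ⊗[k] H l₂) :=
  (TensorProduct.assoc k V (H l₁) (H l₂)).toLinearMap ∘ₗ
    ((pparam
        ((TensorProduct.assoc k (H a) (H l₁) (H l₂)).symm.toLinearMap ∘ₗ
          (TensorProduct.leftComm k (H l₁) (H a) (H l₂)).toLinearMap)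
        (pmapTens
          (pcomp ((LinearMap.llcomp k V V (V ⊗[k] H l₁) (coact l₁)) ∘ₗ ρ.toLinearMap)
            (pright V ((LinearMap.mul k (H l₁)).flip)))
          (LinearMap.mul k (H l₂))))
      (T.Φinv l₁ a l₂)) ∘ₗ
    coact l₂

/-- The right-hand side of the Yetter-Drinfeld quasi-coassociativity axiom, as a linear map:
`v ↦ Φ⁻¹_{α,λ₁,λ₂} ⬝ [(ȳ³_α·v)₍₀,₀₎ ⊗ ((ȳ³_α·v)₍₁,λ₁λ₂₎₍₁,λ₁₎ ȳ¹_{λ₁} ⊗ (ȳ³_α·v)₍₁,λ₁λ₂₎₍₂,λ₂₎ ȳ²_{λ₂})]`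
where `ȳ¹ ⊗ ȳ² ⊗ ȳ³ = Φ⁻¹_{λ₁,λ₂,α}`. -/
noncomputable def ydCoassocRHS (ρ : H a →ₐ[k] Module.End k V)
    (coact : ∀ l : π, V →ₗ[k] V ⊗[k] H l) (l₁ l₂ : π) :
    V →ₗ[k] V ⊗[k] (H l₁ ⊗[k] H l₂) :=
  ((pmapTens ρ.toLinearMap
      (pmapTens (Algebra.lmul k (H l₁)).toLinearMap (Algebra.lmul k (H l₂)).toLinearMap))
    (T.Φinv a l₁ l₂)) ∘ₗ
  ((pparam
      ((LinearMap.lTensor (H a) (TensorProduct.comm k (H l₂) (H l₁)).toLinearMap) ∘ₗ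
        (TensorProduct.leftComm k (H l₂) (H a) (H l₁)).toLinearMap ∘ₗ
        (TensorProduct.assoc k (H l₂) (H a) (H l₁)).toLinearMap ∘ₗ
        (TensorProduct.comm k (H l₁) (H l₂ ⊗[k] H a)).toLinearMap)
      (pcomp
        ((LinearMap.llcomp k V V (V ⊗[k] (H l₁ ⊗[k] H l₂))
            ((LinearMap.lTensor V (T.Δ l₁ l₂).toLinearMap) ∘ₗ coact (l₁ * l₂))) ∘ₗ
          ρ.toLinearMap)
        (pright V
          (pmapTens ((LinearMap.mul k (H l₁)).flip) ((LinearMap.mul k (H l₂)).flip)))))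
    (T.Φinv l₁ l₂ a))

/-- The Yetter-Drinfeld quasi-coassociativity axiom. -/
def ydCoassocProp (ρ : H a →ₐ[k] Module.End k V)
    (coact : ∀ l : π, V →ₗ[k] V ⊗[k] H l) : Prop :=
  ∀ l₁ l₂ : π, ydCoassocLHS T ρ coact l₁ l₂ = ydCoassocRHS T ρ coact l₁ l₂

/-- The right-hand side of the Yetter-Drinfeld compatibility axiom, as a map parameterized
by `Δ_{αβα⁻¹,α}(h)`: `(h₁ ⊗ h₂) ↦ (v ↦ (h₂·v)₍₀,₀₎ ⊗ (h₂·v)₍₁,β₎ φ_{α⁻¹}(h₁))`. -/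
noncomputable def ydCompatRHS (ρ : H a →ₐ[k] Module.End k V)
    {b : π} (coactb : V →ₗ[k] V ⊗[k] H b) :
    (H (a * b * a⁻¹) ⊗[k] H a) →ₗ[k] V →ₗ[k] V ⊗[k] H b :=
  pparam (TensorProduct.comm k (H (a * b * a⁻¹)) (H a)).toLinearMap
    (pcomp ((LinearMap.llcomp k V V (V ⊗[k] H b) coactb) ∘ₗ ρ.toLinearMap)
      (pright V
        ((LinearMap.mul k (H b)).flip ∘ₗ
          castL k H (by group : a⁻¹ * (a * b * a⁻¹) * a⁻¹⁻¹ = b) ∘ₗ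
          (T.φ a⁻¹ (a * b * a⁻¹)).toLinearMap)))

/-- The Yetter-Drinfeld compatibility axiom:
`h₍₁,α₎·v₍₀,₀₎ ⊗ h₍₂,β₎ v₍₁,β₎ = (h₍₂,α₎·v)₍₀,₀₎ ⊗ (h₍₂,α₎·v)₍₁,β₎ φ_{α⁻¹}(h₍₁,αβα⁻¹₎)`. -/
def ydCompatProp (ρ : H a →ₐ[k] Module.End k V)
    (coact : ∀ l : π, V →ₗ[k] V ⊗[k] H l) : Prop :=
  ∀ (b : π) (h : H (a * b)) (v : V),
    (T.tensAlg ρ (Algebra.lmul k (H b))) h (coact b v)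
      = (ydCompatRHS T ρ (coact b))
          ((T.Δ (a * b * a⁻¹) a)
            (castA k H (by group : a * b = a * b * a⁻¹ * a) h)) v

/-- `V` is an `α`-Yetter-Drinfeld module over `T` (relative to the `H_α`-action `ρ` and
the coaction family `coact`). -/
def IsYD (ρ : H a →ₐ[k] Module.End k V)
    (coact : ∀ l : π, V →ₗ[k] V ⊗[k] H l) : Prop :=
  ydCounitProp T coact ∧ ydCoassocProp T ρ coact ∧ ydCompatProp T ρ coact

end QuasiTuraevGCoalgebra
end YD

section Braid
variable {k : Type u} [Field k] {π : Type v} [Group π]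
variable {H : π → Type u} [∀ a, Ring (H a)] [∀ a, Algebra k (H a)]

namespace QuasiTuraevGCoalgebra
variable (T : QuasiTuraevGCoalgebra k H)
variable {a : π} {V : Type u} [AddCommGroup V] [Module k V]

/-- For an `α`-Yetter-Drinfeld module `V` and a left `H_λ`-module `X`, the map
`ĉ_{V,X} : ^αX ⊗ V → V ⊗ X`, `x ⊗ v ↦ v₍₀,₀₎ ⊗ v₍₁,λ₎ · x`. -/
noncomputable def ydBraidInv {l : π} {X : Type u} [AddCommGroup X] [Module k X]
    (coact : ∀ l : π, V →ₗ[k] V ⊗[k] H l) (ρX : H l →ₐ[k] Module.End k X) :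
    (X ⊗[k] V) →ₗ[k] (V ⊗[k] X) :=
  (LinearMap.lTensor V (aev ρX)) ∘ₗ
    (TensorProduct.assoc k V (H l) X).toLinearMap ∘ₗ
    (LinearMap.rTensor X (coact l)) ∘ₗ
    (TensorProduct.comm k X V).toLinearMap

/-- For an `α`-Yetter-Drinfeld module `V` and a left `H_λ`-module `X`, the map
`c_{V,X} : V ⊗ X → ^αX ⊗ V` given by
`v ⊗ x ↦ ^α[J¹₍₁,λ₎ y¹_λ S_{λ⁻¹}(J²_{λ⁻¹} y³_{λ⁻¹} (Ĩ²_α·v)₍₁,λ⁻¹₎ Ĩ¹_{λ⁻¹}) · x]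
⊗ J¹₍₂,α₎ y²_α · (Ĩ²_α·v)₍₀,₀₎`, where `Ĩ¹ ⊗ Ĩ² = I^L_{λ⁻¹,α}`,
`J¹ ⊗ J² = J^R_{λα,λ⁻¹}` and `y¹ ⊗ y² ⊗ y³ = Φ⁻¹_{λ,α,λ⁻¹}`. -/
noncomputable def ydBraid {l : π} {X : Type u} [AddCommGroup X] [Module k X]
    (ρV : H a →ₐ[k] Module.End k V) (coact : ∀ l : π, V →ₗ[k] V ⊗[k] H l)
    (ρX : H l →ₐ[k] Module.End k X) :
    (V ⊗[k] X) →ₗ[k] (X ⊗[k] V) :=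
  ((pparam (TensorProduct.leftComm k (H l) (H a) (H l⁻¹)).toLinearMap
      (ppost (TensorProduct.comm k V X).toLinearMap
        (pmapTens ρV.toLinearMap
          (ppost (aev ρX)
            (pleft X
              (pparam (TensorProduct.comm k (H l) (H l⁻¹)).toLinearMap
                (pcomp
                  (ppost (castL k H (inv_inv l) ∘ₗ (T.S l⁻¹).toLinearMap)
                    (LinearMap.mul k (H l⁻¹)))
                  (LinearMap.mul k (H l)))))))))
    (((TensorProduct.assoc k (H l) (H a) (H l⁻¹)).toLinearMap
        ((LinearMap.rTensor (H l⁻¹) (T.Δ l a).toLinearMap) (T.JR (l * a) l⁻¹))) *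
      T.Φinv l a l⁻¹)) ∘ₗ
  (TensorProduct.assoc k V (H l⁻¹) X).toLinearMap ∘ₗ
  (LinearMap.rTensor X
    ((pparam (TensorProduct.comm k (H l⁻¹) (H a)).toLinearMap
        (pcomp ((LinearMap.llcomp k V V (V ⊗[k] H l⁻¹) (coact l⁻¹)) ∘ₗ ρV.toLinearMap)
          (pright V ((LinearMap.mul k (H l⁻¹)).flip))))
      (T.IL l⁻¹ a)))

/-- The coaction of the conjugate Yetter-Drinfeld module `^βV`:
`ρ_{^βV,λ}(v) = v₍₀,₀₎ ⊗ φ_β(v₍₁,β⁻¹λβ₎)`. -/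
noncomputable def conjCoact (coact : ∀ l : π, V →ₗ[k] V ⊗[k] H l) (b : π) :
    ∀ l : π, V →ₗ[k] V ⊗[k] H l :=
  fun l =>
    (LinearMap.lTensor V
      (castL k H (by group : b * (b⁻¹ * l * b) * b⁻¹ = l) ∘ₗ
        (T.φ b (b⁻¹ * l * b)).toLinearMap)) ∘ₗ
    coact (b⁻¹ * l * b)

variable {b : π} {W : Type u} [AddCommGroup W] [Module k W]

/-- The coaction of the tensor product of an `α`-Yetter-Drinfeld module `V` and a
`β`-Yetter-Drinfeld module `W`:
`ρ_{V⊗W,λ}(v ⊗ w) = t¹_α Y¹_α · (y²_α·v)₍₀,₀₎ ⊗ t²_β · (Y³_β y³_β·w)₍₀,₀₎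
  ⊗ t³_λ (Y³_β y³_β·w)₍₁,λ₎ Y²_λ φ_{β⁻¹}((y²_α·v)₍₁,βλβ⁻¹₎) y¹_λ`
where `t = Φ⁻¹_{α,β,λ}`, `Y = Φ_{α,λ,β}` and `y = Φ⁻¹_{λ,α,β}`. -/
noncomputable def ydTensorCoact (ρV : H a →ₐ[k] Module.End k V)
    (coactV : ∀ l : π, V →ₗ[k] V ⊗[k] H l)
    (ρW : H b →ₐ[k] Module.End k W)
    (coactW : ∀ l : π, W →ₗ[k] W ⊗[k] H l) (l : π) :
    (V ⊗[k] W) →ₗ[k] (V ⊗[k] W) ⊗[k] H l :=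
  (TensorProduct.assoc k V W (H l)).symm.toLinearMap ∘ₗ
  -- stage `t = Φ⁻¹_{α,β,λ}` : `t¹` acts on `V`, `t²` acts on `W`, `t³` multiplies on the left
  ((pmapTens ρV.toLinearMap (pmapTens ρW.toLinearMap (LinearMap.mul k (H l))))
    (T.Φinv a b l)) ∘ₗ
  -- stage `Y = Φ_{α,λ,β}` : `Y¹` acts on `V`; `Y²` multiplies on the left; then `Y³` acts
  -- on `W`, the coaction `ρ_{W,λ}` is applied, and `(…·w)₍₁,λ₎` multiplies on the left
  ((pmapTens ρV.toLinearMap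
      (pcomp (pright W (LinearMap.mul k (H l)))
        (ppost
          ((LinearMap.lTensor W (LinearMap.mul' k (H l))) ∘ₗ
            (TensorProduct.assoc k W (H l) (H l)).toLinearMap)
          (pleft (H l)
            ((LinearMap.llcomp k W W (W ⊗[k] H l) (coactW l)) ∘ₗ ρW.toLinearMap)))))
    (T.Φ a l b)) ∘ₗ
  -- stage `y = Φ⁻¹_{λ,α,β}` : `y²` acts on `V` followed by `ρ_{V,βλβ⁻¹}`, whose second leg
  -- is pushed through `φ_{β⁻¹}` and multiplied on the left of `y¹`; `y³` acts on `W`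
  ((pparam
      ((LinearMap.lTensor (H a) (TensorProduct.comm k (H l) (H b)).toLinearMap) ∘ₗ
        (TensorProduct.leftComm k (H l) (H a) (H b)).toLinearMap)
      (ppost
        ((LinearMap.lTensor V (LinearMap.lTensor W (LinearMap.mul' k (H l)))) ∘ₗ
          (LinearMap.lTensor V (TensorProduct.leftComm k (H l) W (H l)).toLinearMap) ∘ₗ
          (TensorProduct.assoc k V (H l) (W ⊗[k] H l)).toLinearMap ∘ₗ
          (LinearMap.rTensor (W ⊗[k] H l)
            (LinearMap.lTensor V
              (castL k H (by group : b⁻¹ * (b * l * b⁻¹) * b⁻¹⁻¹ = l) ∘ₗ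
                (T.φ b⁻¹ (b * l * b⁻¹)).toLinearMap))))
        (pmapTens
          ((LinearMap.llcomp k V V (V ⊗[k] H (b * l * b⁻¹)) (coactV (b * l * b⁻¹))) ∘ₗ
            ρV.toLinearMap)
          (ppre (TensorProduct.rid k W).symm.toLinearMap
            (pmapTens ρW.toLinearMap
              ((LinearMap.ringLmapEquivSelf k k (H l)).symm.toLinearMap))))))
    (T.Φinv l a b))

end QuasiTuraevGCoalgebra
end Braid

section HB
variable {k : Type u} [Field k] {π : Type v} [Group π]
variable {H : π → Type u} [∀ a, Ring (H a)] [∀ a, Algebra k (H a)]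
variable (T : QuasiTuraevGCoalgebra k H)

open QuasiTuraevGCoalgebra

/-- A half-braiding on a left `H_α`-module `V`: a natural family of `H_{αλ}`-linear
isomorphisms `c_{V,X} : V ⊗ X → ^αX ⊗ V` satisfying the hexagon identity. A pair
`(V, c_{V,-})` is an object of the `α`-th component `Z_α(Rep(H))` of the center of
`Rep(H)`. -/
structure HalfBraiding (a : π) (V : Type u) [AddCommGroup V] [Module k V]
    (ρV : H a →ₐ[k] Module.End k V) where
  /-- the underlying `k`-linear isomorphisms `c_{V,X}` -/
  braid : ∀ (l : π) (X : Type u) [AddCommGroup X] [Module k X]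
    (ρX : H l →ₐ[k] Module.End k X), (V ⊗[k] X) ≃ₗ[k] (X ⊗[k] V)
  /-- `c_{V,X}` is `H_{αλ}`-linear -/
  hlinear : ∀ (l : π) (X : Type u) [AddCommGroup X] [Module k X]
    (ρX : H l →ₐ[k] Module.End k X) (h : H (a * l)) (t : V ⊗[k] X),
    braid l X ρX ((T.tensAlg ρV ρX h) t)
      = (T.tensAlg (T.conjAlg ρX a) ρV
          (castA k H (by group : a * l = a * l * a⁻¹ * a) h)) (braid l X ρX t)
  /-- `c_{V,-}` is natural -/
  hnatural : ∀ (l : π) (X X' : Type u) [AddCommGroup X] [Module k X]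
    [AddCommGroup X'] [Module k X']
    (ρX : H l →ₐ[k] Module.End k X) (ρX' : H l →ₐ[k] Module.End k X')
    (g : X →ₗ[k] X'), (∀ (h : H l) (x : X), g (ρX h x) = ρX' h (g x)) →
    ∀ t : V ⊗[k] X,
      braid l X' ρX' ((LinearMap.lTensor V g) t)
        = (LinearMap.rTensor V g) (braid l X ρX t)
  /-- the hexagon identity
  `c_{V,X₁⊗X₂} = a⁻¹_{^αX₁,^αX₂,V} ∘ (id ⊗ c_{V,X₂}) ∘ a_{^αX₁,V,X₂} ∘ (c_{V,X₁} ⊗ id) ∘ a⁻¹_{V,X₁,X₂}` -/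
  hhexagon : ∀ (l₁ l₂ : π) (X₁ X₂ : Type u) [AddCommGroup X₁] [Module k X₁]
    [AddCommGroup X₂] [Module k X₂]
    (ρ₁ : H l₁ →ₐ[k] Module.End k X₁) (ρ₂ : H l₂ →ₐ[k] Module.End k X₂),
    (braid (l₁ * l₂) (X₁ ⊗[k] X₂) (T.tensAlg ρ₁ ρ₂)).toLinearMap
      = T.assocModInv (T.conjAlg ρ₁ a) (T.conjAlg ρ₂ a) ρV ∘ₗ
        LinearMap.lTensor X₁ (braid l₂ X₂ ρ₂).toLinearMap ∘ₗ
        T.assocMod (T.conjAlg ρ₁ a) ρV ρ₂ ∘ₗ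
        LinearMap.rTensor X₂ (braid l₁ X₁ ρ₁).toLinearMap ∘ₗ
        T.assocModInv ρV ρ₁ ρ₂

end HB

section HB2
variable {k : Type u} [Field k] {π : Type v} [Group π]
variable {H : π → Type u} [∀ a, Ring (H a)] [∀ a, Algebra k (H a)]
variable {T : QuasiTuraevGCoalgebra k H}

/-- The coaction induced by a half-braiding: `ρ_{V,λ}(v) = c⁻¹_{V,H_λ}(^α1_λ ⊗ v)`. -/
noncomputable def HalfBraiding.coactOf {a : π} {V : Type u} [AddCommGroup V] [Module k V]
    {ρV : H a →ₐ[k] Module.End k V} (hb : HalfBraiding T a V ρV) :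
    ∀ l : π, V →ₗ[k] V ⊗[k] H l :=
  fun l =>
    (hb.braid l (H l) (Algebra.lmul k (H l))).symm.toLinearMap ∘ₗ
      TensorProduct.mk k (H l) V 1

end HB2

-- ==== auxiliary lemmas ====
set_option linter.unusedSectionVars false
set_option linter.unusedVariables false

section Aux
variable {k : Type u} [Field k] {π : Type v} [Group π]
variable {H : π → Type u} [∀ a, Ring (H a)] [∀ a, Algebra k (H a)]
open QuasiTuraevGCoalgebra

lemma castL_rfl (a : π) : castL k H (rfl : a = a) = LinearMap.id := rfl

lemma castA_rfl (a : π) : castA k H (rfl : a = a) = AlgHom.id k (H a) := rfl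

lemma castA_toLinearMap {a b : π} (e : a = b) :
    (castA k H e).toLinearMap = castL k H e := by subst e; rfl

lemma castL_castL {a b c : π} (e₁ : a = b) (e₂ : b = c) (x : H a) :
    castL k H e₂ (castL k H e₁ x) = castL k H (e₁.trans e₂) x := by
  subst e₁; subst e₂; rfl

lemma castL_inj {a b : π} (e : a = b) : Function.Injective (castL k H e) := by
  subst e; exact fun _ _ h => h

namespace QuasiTuraevGCoalgebra
variable (T : QuasiTuraevGCoalgebra k H)

lemma phi_cast (b : π) {c d : π} (e : c = d) (e' : b*c*b⁻¹ = b*d*b⁻¹) (x : H c) :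
    T.φ b d (castL k H e x) = castL k H e' (T.φ b c x) := by
  subst e; rfl

lemma phi_congr {b b' : π} (e : b = b') (c : π) (e' : b*c*b⁻¹ = b'*c*b'⁻¹) (x : H c) :
    castL k H e' (T.φ b c x) = T.φ b' c x := by
  subst e; rfl

lemma phi_one (c : π) (x : H c) :
    castL k H (by group : (1:π)*c*1⁻¹ = c) (T.φ 1 c x) = x := by
  have e : (1:π)*c*1⁻¹ = c := by group
  have key := T.φ_mul 1 1 c x
  have h1 : (T.φ 1 c) x =
      castL k H e.symm (castL k H e ((T.φ 1 c) x)) := by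
    rw [castL_castL]; rfl
  rw [h1, phi_cast T 1 e.symm (by group), castL_castL] at key
  have h2 : T.φ (1*1 : π) c x
      = castL k H (by group : (1:π)*c*1⁻¹ = (1*1)*c*(1*1)⁻¹) (T.φ 1 c x) :=
    (phi_congr T (by group : (1:π) = 1*1) c (by group) x).symm
  rw [h2] at key
  exact (T.φ 1 c).injective (castL_inj _ key)

/-- triple tensor product of algebra maps -/
noncomputable def cmap3 {a b c a' b' c' : π} (f₁ : H a →ₐ[k] H a')
    (f₂ : H b →ₐ[k] H b') (f₃ : H c →ₐ[k] H c') :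
    (H a ⊗[k] (H b ⊗[k] H c)) →ₐ[k] (H a' ⊗[k] (H b' ⊗[k] H c')) :=
  Algebra.TensorProduct.map f₁ (Algebra.TensorProduct.map f₂ f₃)

lemma cmap3_apply {a b c a' b' c' : π} (f₁ : H a →ₐ[k] H a')
    (f₂ : H b →ₐ[k] H b') (f₃ : H c →ₐ[k] H c') (t : H a ⊗[k] (H b ⊗[k] H c)) :
    cmap3 f₁ f₂ f₃ t
      = TensorProduct.map f₁.toLinearMap
          (TensorProduct.map f₂.toLinearMap f₃.toLinearMap) t := by
  induction t with
  | zero => simp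
  | add x y hx hy => simp [map_add, hx, hy]
  | tmul x y =>
      induction y with
      | zero => simp [cmap3]
      | add x' y' hx' hy' => simp_all [cmap3, tmul_add]
      | tmul u w => simp [cmap3]

lemma castPhi {a a' b b' c c' : π} (ea : a = a') (eb : b = b') (ec : c = c') :
    TensorProduct.map (castL k H ea)
      (TensorProduct.map (castL k H eb) (castL k H ec)) (T.Φ a b c)
      = T.Φ a' b' c' := by
  subst ea; subst eb; subst ec
  simp [castL_rfl]

lemma conjPhi (e t u : π) {a b c a' b' c' : π} (ea : e*a*e⁻¹ = a')
    (eb : t*b*t⁻¹ = b') (ec : u*c*u⁻¹ = c') :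
    cmap3 ((castA k H ea).comp (T.φ e a).toAlgHom)
      ((castA k H eb).comp (T.φ t b).toAlgHom)
      ((castA k H ec).comp (T.φ u c).toAlgHom) (T.Φ a b c) = T.Φ a' b' c' := by
  rw [cmap3_apply, AlgHom.comp_toLinearMap, AlgHom.comp_toLinearMap,
    AlgHom.comp_toLinearMap, castA_toLinearMap, castA_toLinearMap, castA_toLinearMap,
    TensorProduct.map_comp, TensorProduct.map_comp, LinearMap.comp_apply]
  erw [T.φ_Φ e t u a b c]
  exact castPhi T ea eb ec

lemma conjPhiInv (e t u : π) {a b c a' b' c' : π} (ea : e*a*e⁻¹ = a')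
    (eb : t*b*t⁻¹ = b') (ec : u*c*u⁻¹ = c') :
    cmap3 ((castA k H ea).comp (T.φ e a).toAlgHom)
      ((castA k H eb).comp (T.φ t b).toAlgHom)
      ((castA k H ec).comp (T.φ u c).toAlgHom) (T.Φinv a b c) = T.Φinv a' b' c' := by
  set M := cmap3 ((castA k H ea).comp (T.φ e a).toAlgHom)
      ((castA k H eb).comp (T.φ t b).toAlgHom)
      ((castA k H ec).comp (T.φ u c).toAlgHom) with hM
  have h : M (T.Φ a b c) = T.Φ a' b' c' := conjPhi T e t u ea eb ec
  calc M (T.Φinv a b c)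
      = M (T.Φinv a b c) * (T.Φ a' b' c' * T.Φinv a' b' c') := by
        rw [T.Φ_mul_Φinv, mul_one]
    _ = (M (T.Φinv a b c) * M (T.Φ a b c)) * T.Φinv a' b' c' := by
        rw [h, mul_assoc]
    _ = T.Φinv a' b' c' := by
        rw [← map_mul, T.Φinv_mul_Φ, map_one, one_mul]

section Act3
variable {a b c : π} {M₁ M₂ M₃ : Type u}
  [AddCommGroup M₁] [Module k M₁] [AddCommGroup M₂] [Module k M₂]
  [AddCommGroup M₃] [Module k M₃]
  (ρ₁ : H a →ₐ[k] Module.End k M₁) (ρ₂ : H b →ₐ[k] Module.End k M₂)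
  (ρ₃ : H c →ₐ[k] Module.End k M₃)

/-- triple action as an algebra map -/
noncomputable def act3 :
    (H a ⊗[k] (H b ⊗[k] H c)) →ₐ[k] Module.End k (M₁ ⊗[k] (M₂ ⊗[k] M₃)) :=
  ((Module.endTensorEndAlgHom (R := k) (S := k) (A := k) (M := M₁)
        (N := M₂ ⊗[k] M₃)).comp
    (Algebra.TensorProduct.map ρ₁
      ((Module.endTensorEndAlgHom (R := k) (S := k) (A := k) (M := M₂)
            (N := M₃)).comp
        (Algebra.TensorProduct.map ρ₂ ρ₃))))

lemma act3_eq_pmap (t : H a ⊗[k] (H b ⊗[k] H c)) :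
    pmapTens ρ₁.toLinearMap (pmapTens ρ₂.toLinearMap ρ₃.toLinearMap) t
      = act3 ρ₁ ρ₂ ρ₃ t := by
  induction t with
  | zero => simp
  | add x y hx hy => simp [map_add, hx, hy]
  | tmul x y =>
      induction y with
      | zero => simp
      | add x' y' hx' hy' => simp_all [tmul_add, map_add]
      | tmul u w =>
          simp [act3, pmapTens, Module.endTensorEndAlgHom_apply]
          rfl

lemma act3_comp_act3 (t s : H a ⊗[k] (H b ⊗[k] H c)) (hts : t * s = 1)
    (x : M₁ ⊗[k] (M₂ ⊗[k] M₃)) :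
    act3 ρ₁ ρ₂ ρ₃ t (act3 ρ₁ ρ₂ ρ₃ s x) = x := by
  have : act3 ρ₁ ρ₂ ρ₃ t * act3 ρ₁ ρ₂ ρ₃ s = 1 := by
    rw [← map_mul, hts, map_one]
  calc act3 ρ₁ ρ₂ ρ₃ t (act3 ρ₁ ρ₂ ρ₃ s x)
      = (act3 ρ₁ ρ₂ ρ₃ t * act3 ρ₁ ρ₂ ρ₃ s) x := rfl
    _ = x := by rw [this]; rfl

lemma assocMod_assocModInv (x : M₁ ⊗[k] (M₂ ⊗[k] M₃)) :
    T.assocMod ρ₁ ρ₂ ρ₃ (T.assocModInv ρ₁ ρ₂ ρ₃ x) = x := by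
  show (pmapTens _ _ (T.Φ a b c))
      ((TensorProduct.assoc k M₁ M₂ M₃)
        ((TensorProduct.assoc k M₁ M₂ M₃).symm
          ((pmapTens _ _ (T.Φinv a b c)) x))) = x
  rw [LinearEquiv.apply_symm_apply, act3_eq_pmap, act3_eq_pmap]
  exact act3_comp_act3 ρ₁ ρ₂ ρ₃ _ _ (T.Φ_mul_Φinv a b c) x

lemma assocModInv_assocMod (x : (M₁ ⊗[k] M₂) ⊗[k] M₃) :
    T.assocModInv ρ₁ ρ₂ ρ₃ (T.assocMod ρ₁ ρ₂ ρ₃ x) = x := by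
  show (TensorProduct.assoc k M₁ M₂ M₃).symm
      ((pmapTens _ _ (T.Φinv a b c))
        ((pmapTens _ _ (T.Φ a b c))
          ((TensorProduct.assoc k M₁ M₂ M₃) x))) = x
  rw [act3_eq_pmap, act3_eq_pmap,
    act3_comp_act3 ρ₁ ρ₂ ρ₃ _ _ (T.Φinv_mul_Φ a b c), LinearEquiv.symm_apply_apply]

end Act3

lemma tensAlg_lmul (a b : π) (h : H (a * b)) (u : H a ⊗[k] H b) :
    T.tensAlg (Algebra.lmul k (H a)) (Algebra.lmul k (H b)) h u = (T.Δ a b h) * u := by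
  show (Module.endTensorEndAlgHom (R := k) (S := k) (A := k))
      ((Algebra.TensorProduct.map (Algebra.lmul k (H a)) (Algebra.lmul k (H b)))
        (T.Δ a b h)) u = (T.Δ a b h) * u
  generalize (T.Δ a b h) = z
  induction z with
  | zero => simp
  | add x y hx hy => simp [map_add, add_mul, hx, hy]
  | tmul x y =>
      induction u with
      | zero => simp
      | add u₁ u₂ h₁ h₂ => simp_all [mul_add, map_add]
      | tmul u₁ u₂ =>
          simp [Module.endTensorEndAlgHom_apply, Algebra.TensorProduct.map_tmul,
            Algebra.TensorProduct.tmul_mul_tmul]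

section Braids
variable {a : π} {V : Type u} [AddCommGroup V] [Module k V]
variable {ρV : H a →ₐ[k] Module.End k V} (hb : HalfBraiding T a V ρV)

lemma braid_coact (l : π) (v : V) :
    hb.braid l (H l) (Algebra.lmul k (H l)) (hb.coactOf l v) = (1 : H l) ⊗ₜ[k] v := by
  simp [HalfBraiding.coactOf]

lemma braid_symm_eq (l : π) (X : Type u) [AddCommGroup X] [Module k X]
    (ρX : H l →ₐ[k] Module.End k X) (g : H l →ₗ[k] X)
    (hg : ∀ (h h' : H l), g (h * h') = ρX h (g h')) (v : V) :
    (hb.braid l X ρX).symm (g 1 ⊗ₜ[k] v)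
      = LinearMap.lTensor V g (hb.coactOf l v) := by
  have hnat := hb.hnatural l (H l) X (Algebra.lmul k (H l)) ρX g
    (fun h x => by simpa using hg h x) (hb.coactOf l v)
  rw [braid_coact T hb l v, LinearMap.rTensor_tmul] at hnat
  exact (hb.braid l X ρX).symm_apply_eq.mpr hnat.symm

lemma braid_symm_reg (l : π) (x : H l) (v : V) :
    (hb.braid l (H l) (Algebra.lmul k (H l))).symm (x ⊗ₜ[k] v)
      = LinearMap.lTensor V (LinearMap.mulRight k x) (hb.coactOf l v) := by
  have := braid_symm_eq T hb l (H l) (Algebra.lmul k (H l))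
    (LinearMap.mulRight k x) (fun h h' => by simp [mul_assoc]) v
  simpa using this

lemma braid_symm_tens (l₁ l₂ : π) (u : H l₁ ⊗[k] H l₂) (v : V) :
    (hb.braid (l₁ * l₂) (H l₁ ⊗[k] H l₂)
        (T.tensAlg (Algebra.lmul k (H l₁)) (Algebra.lmul k (H l₂)))).symm (u ⊗ₜ[k] v)
      = LinearMap.lTensor V
          (LinearMap.mulRight k u ∘ₗ (T.Δ l₁ l₂).toLinearMap)
          (hb.coactOf (l₁ * l₂) v) := by
  have := braid_symm_eq T hb (l₁ * l₂) (H l₁ ⊗[k] H l₂)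
    (T.tensAlg (Algebra.lmul k (H l₁)) (Algebra.lmul k (H l₂)))
    (LinearMap.mulRight k u ∘ₗ (T.Δ l₁ l₂).toLinearMap)
    (fun h h' => by simp [tensAlg_lmul, map_mul, mul_assoc]) v
  simpa using this

end Braids

lemma mul_flip_eq {A : Type u} [Ring A] [Algebra k A] (x : A) :
    (LinearMap.mul k A).flip x = LinearMap.mulRight k x := by
  ext y; simp

lemma mulRight_tmul {A B : Type u} [Ring A] [Algebra k A] [Ring B] [Algebra k B]
    (x₁ : A) (x₂ : B) :
    LinearMap.mulRight k (x₁ ⊗ₜ[k] x₂ : A ⊗[k] B)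
      = TensorProduct.map (LinearMap.mulRight k x₁) (LinearMap.mulRight k x₂) := by
  apply TensorProduct.ext'
  intro u₁ u₂
  simp [Algebra.TensorProduct.tmul_mul_tmul]

lemma castA_apply_eq_castL {a b : π} (e : a = b) (x : H a) :
    castA k H e x = castL k H e x := by subst e; rfl

lemma phi_one_alg (c : π) :
    (castA k H (by group : (1:π)*c*1⁻¹ = c)).comp (T.φ 1 c).toAlgHom
      = AlgHom.id k (H c) := by
  apply AlgHom.ext
  intro x
  show castA k H _ (T.φ 1 c x) = x
  rw [castA_apply_eq_castL]
  exact phi_one T c x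

section Act3b
variable {a₁ a₂ a₃ b₁ b₂ b₃ : π} {M₁ M₂ M₃ : Type u}
  [AddCommGroup M₁] [Module k M₁] [AddCommGroup M₂] [Module k M₂]
  [AddCommGroup M₃] [Module k M₃]
  (ρ₁ : H a₁ →ₐ[k] Module.End k M₁) (ρ₂ : H a₂ →ₐ[k] Module.End k M₂)
  (ρ₃ : H a₃ →ₐ[k] Module.End k M₃)
  (f₁ : H b₁ →ₐ[k] H a₁) (f₂ : H b₂ →ₐ[k] H a₂) (f₃ : H b₃ →ₐ[k] H a₃)

lemma act3_precomp (t : H b₁ ⊗[k] (H b₂ ⊗[k] H b₃)) :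
    act3 (ρ₁.comp f₁) (ρ₂.comp f₂) (ρ₃.comp f₃) t
      = act3 ρ₁ ρ₂ ρ₃ (cmap3 f₁ f₂ f₃ t) := by
  induction t with
  | zero => simp
  | add x y hx hy => simp [map_add, hx, hy]
  | tmul x y =>
      induction y with
      | zero => simp [cmap3]
      | add x' y' hx' hy' => simp_all [cmap3, tmul_add, map_add]
      | tmul u w => simp [act3, cmap3]

end Act3b

section ConjRed
variable {a : π} {V : Type u} [AddCommGroup V] [Module k V]
variable (ρV : H a →ₐ[k] Module.End k V)

lemma conj_red2 (l₁ l₂ : π) :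
    pmapTens (T.conjAlg (Algebra.lmul k (H l₁)) a).toLinearMap
      (pmapTens (T.conjAlg (Algebra.lmul k (H l₂)) a).toLinearMap ρV.toLinearMap)
      (T.Φinv (a*l₁*a⁻¹) (a*l₂*a⁻¹) a)
    = pmapTens (Algebra.lmul k (H l₁)).toLinearMap
        (pmapTens (Algebra.lmul k (H l₂)).toLinearMap ρV.toLinearMap)
        (T.Φinv l₁ l₂ a) := by
  rw [act3_eq_pmap, act3_eq_pmap]
  have h1 : T.conjAlg (Algebra.lmul k (H l₁)) a
      = (Algebra.lmul k (H l₁)).comp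
          ((castA k H (by group : a⁻¹ * (a*l₁*a⁻¹) * a⁻¹⁻¹ = l₁)).comp
            (T.φ a⁻¹ (a*l₁*a⁻¹)).toAlgHom) := rfl
  have h2 : T.conjAlg (Algebra.lmul k (H l₂)) a
      = (Algebra.lmul k (H l₂)).comp
          ((castA k H (by group : a⁻¹ * (a*l₂*a⁻¹) * a⁻¹⁻¹ = l₂)).comp
            (T.φ a⁻¹ (a*l₂*a⁻¹)).toAlgHom) := rfl
  have h3 : ρV = ρV.comp
      ((castA k H (by group : (1:π)*a*1⁻¹ = a)).comp (T.φ 1 a).toAlgHom) := by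
    rw [phi_one_alg, AlgHom.comp_id]
  rw [h1, h2]
  nth_rewrite 1 [h3]
  rw [act3_precomp, conjPhiInv]

lemma conj_red1 (l₁ l₂ : π) :
    pmapTens (T.conjAlg (Algebra.lmul k (H l₁)) a).toLinearMap
      (pmapTens ρV.toLinearMap (Algebra.lmul k (H l₂)).toLinearMap)
      (T.Φinv (a*l₁*a⁻¹) a l₂)
    = pmapTens (Algebra.lmul k (H l₁)).toLinearMap
        (pmapTens ρV.toLinearMap (Algebra.lmul k (H l₂)).toLinearMap)
        (T.Φinv l₁ a l₂) := by
  rw [act3_eq_pmap, act3_eq_pmap]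
  have h1 : T.conjAlg (Algebra.lmul k (H l₁)) a
      = (Algebra.lmul k (H l₁)).comp
          ((castA k H (by group : a⁻¹ * (a*l₁*a⁻¹) * a⁻¹⁻¹ = l₁)).comp
            (T.φ a⁻¹ (a*l₁*a⁻¹)).toAlgHom) := rfl
  have h3 : ρV = ρV.comp
      ((castA k H (by group : (1:π)*a*1⁻¹ = a)).comp (T.φ 1 a).toAlgHom) := by
    rw [phi_one_alg, AlgHom.comp_id]
  have h4 : Algebra.lmul k (H l₂) = (Algebra.lmul k (H l₂)).comp
      ((castA k H (by group : (1:π)*l₂*1⁻¹ = l₂)).comp (T.φ 1 l₂).toAlgHom) := by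
    rw [phi_one_alg, AlgHom.comp_id]
  rw [h1]
  nth_rewrite 1 [h3]
  nth_rewrite 1 [h4]
  rw [act3_precomp, conjPhiInv]

end ConjRed

lemma rTensor_equiv_cancel {M N P : Type u} [AddCommGroup M] [Module k M]
    [AddCommGroup N] [Module k N] [AddCommGroup P] [Module k P]
    (e : M ≃ₗ[k] N) (u : M ⊗[k] P) :
    LinearMap.rTensor P e.toLinearMap (LinearMap.rTensor P e.symm.toLinearMap
      (LinearMap.rTensor P e.toLinearMap u)) = LinearMap.rTensor P e.toLinearMap u := by
  rw [← LinearMap.comp_apply, ← LinearMap.rTensor_comp]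
  have h : (e.toLinearMap ∘ₗ e.symm.toLinearMap) = LinearMap.id := by ext x; simp
  rw [h, LinearMap.rTensor_id, LinearMap.id_apply]

lemma lTensor_equiv_cancel {M N P : Type u} [AddCommGroup M] [Module k M]
    [AddCommGroup N] [Module k N] [AddCommGroup P] [Module k P]
    (e : M ≃ₗ[k] N) (u : P ⊗[k] N) :
    LinearMap.lTensor P e.toLinearMap (LinearMap.lTensor P e.symm.toLinearMap u) = u := by
  rw [← LinearMap.comp_apply, ← LinearMap.lTensor_comp]
  have h : (e.toLinearMap ∘ₗ e.symm.toLinearMap) = LinearMap.id := by ext x; simp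
  rw [h, LinearMap.lTensor_id, LinearMap.id_apply]

lemma rTensor_equiv_cancel' {M N P : Type u} [AddCommGroup M] [Module k M]
    [AddCommGroup N] [Module k N] [AddCommGroup P] [Module k P]
    (e : M ≃ₗ[k] N) (u : N ⊗[k] P) :
    LinearMap.rTensor P e.toLinearMap (LinearMap.rTensor P e.symm.toLinearMap u) = u := by
  rw [← LinearMap.comp_apply, ← LinearMap.rTensor_comp]
  have h : (e.toLinearMap ∘ₗ e.symm.toLinearMap) = LinearMap.id := by ext x; simp
  rw [h, LinearMap.rTensor_id, LinearMap.id_apply]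

section Hexa
variable {a : π} {V : Type u} [AddCommGroup V] [Module k V]
variable {ρV : H a →ₐ[k] Module.End k V} (hb : HalfBraiding T a V ρV)

lemma hexagon_inv (l₁ l₂ : π) (w : H l₁ ⊗[k] (H l₂ ⊗[k] V)) :
    pmapTens ρV.toLinearMap
      (pmapTens (Algebra.lmul k (H l₁)).toLinearMap
        (Algebra.lmul k (H l₂)).toLinearMap) (T.Φinv a l₁ l₂)
      ((hb.braid (l₁*l₂) (H l₁ ⊗[k] H l₂)
          (T.tensAlg (Algebra.lmul k (H l₁)) (Algebra.lmul k (H l₂)))).symm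
        (T.assocModInv (T.conjAlg (Algebra.lmul k (H l₁)) a)
          (T.conjAlg (Algebra.lmul k (H l₂)) a) ρV w))
    = (TensorProduct.assoc k V (H l₁) (H l₂))
        ((LinearMap.rTensor (H l₂) (hb.braid l₁ (H l₁)
            (Algebra.lmul k (H l₁))).symm.toLinearMap)
          (T.assocModInv (T.conjAlg (Algebra.lmul k (H l₁)) a) ρV
            (Algebra.lmul k (H l₂))
            ((LinearMap.lTensor (H l₁) (hb.braid l₂ (H l₂)
                (Algebra.lmul k (H l₂))).symm.toLinearMap) w))) := by
  set lm₁ := Algebra.lmul k (H l₁)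
  set lm₂ := Algebra.lmul k (H l₂)
  set C := hb.braid (l₁*l₂) (H l₁ ⊗[k] H l₂) (T.tensAlg lm₁ lm₂) with hC
  set y := (TensorProduct.assoc k V (H l₁) (H l₂))
      ((LinearMap.rTensor (H l₂) (hb.braid l₁ (H l₁) lm₁).symm.toLinearMap)
        (T.assocModInv (T.conjAlg lm₁ a) ρV lm₂
          ((LinearMap.lTensor (H l₁) (hb.braid l₂ (H l₂) lm₂).symm.toLinearMap) w)))
      with hy
  suffices h : C (pmapTens ρV.toLinearMap
      (pmapTens lm₁.toLinearMap lm₂.toLinearMap) (T.Φ a l₁ l₂) y)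
      = T.assocModInv (T.conjAlg lm₁ a) (T.conjAlg lm₂ a) ρV w by
    rw [← h, LinearEquiv.symm_apply_apply, act3_eq_pmap, act3_eq_pmap,
      act3_comp_act3 ρV lm₁ lm₂ _ _ (T.Φinv_mul_Φ a l₁ l₂)]
  have hex := congrArg
    (fun f : (V ⊗[k] (H l₁ ⊗[k] H l₂)) →ₗ[k] ((H l₁ ⊗[k] H l₂) ⊗[k] V) =>
      f (pmapTens ρV.toLinearMap
          (pmapTens lm₁.toLinearMap lm₂.toLinearMap) (T.Φ a l₁ l₂) y))
    (hb.hhexagon l₁ l₂ (H l₁) (H l₂) lm₁ lm₂)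
  simp only [LinearMap.comp_apply] at hex
  show C.toLinearMap _ = _
  rw [hex]
  have s1 : T.assocModInv ρV lm₁ lm₂
      (pmapTens ρV.toLinearMap
        (pmapTens lm₁.toLinearMap lm₂.toLinearMap) (T.Φ a l₁ l₂) y)
      = (LinearMap.rTensor (H l₂) (hb.braid l₁ (H l₁) lm₁).symm.toLinearMap)
          (T.assocModInv (T.conjAlg lm₁ a) ρV lm₂
            ((LinearMap.lTensor (H l₁)
              (hb.braid l₂ (H l₂) lm₂).symm.toLinearMap) w)) := by
    show (TensorProduct.assoc k V (H l₁) (H l₂)).symm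
        ((pmapTens ρV.toLinearMap
          (pmapTens lm₁.toLinearMap lm₂.toLinearMap) (T.Φinv a l₁ l₂))
          ((pmapTens ρV.toLinearMap
            (pmapTens lm₁.toLinearMap lm₂.toLinearMap) (T.Φ a l₁ l₂)) y)) = _
    rw [act3_eq_pmap, act3_eq_pmap,
      act3_comp_act3 ρV lm₁ lm₂ _ _ (T.Φinv_mul_Φ a l₁ l₂), hy,
      LinearEquiv.symm_apply_apply]
  rw [s1, rTensor_equiv_cancel', assocMod_assocModInv, lTensor_equiv_cancel]
end Hexa

end QuasiTuraevGCoalgebra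
end Aux

section Statements
variable {k : Type u} [Field k] {π : Type v} [Group π]
variable {H : π → Type u} [∀ a, Ring (H a)] [∀ a, Algebra k (H a)]
open QuasiTuraevGCoalgebra

/-- The coaction induced by a half-braiding satisfies the
quasi-coassociativity axiom (ii) of Yetter-Drinfeld modules. -/
theorem stmt8 (T : QuasiTuraevGCoalgebra k H) {a : π} {V : Type u}
    [AddCommGroup V] [Module k V] (ρV : H a →ₐ[k] Module.End k V)
    (hb : HalfBraiding T a V ρV) :
    T.ydCoassocProp ρV hb.coactOf := by
  intro l₁ l₂
  apply LinearMap.ext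
  intro v
  have key := hexagon_inv T hb l₁ l₂ ((1:H l₁) ⊗ₜ[k] ((1:H l₂) ⊗ₜ[k] v))
  have hA : pmapTens ρV.toLinearMap
      (pmapTens (Algebra.lmul k (H l₁)).toLinearMap
        (Algebra.lmul k (H l₂)).toLinearMap) (T.Φinv a l₁ l₂)
      ((hb.braid (l₁*l₂) (H l₁ ⊗[k] H l₂)
          (T.tensAlg (Algebra.lmul k (H l₁)) (Algebra.lmul k (H l₂)))).symm
        (T.assocModInv (T.conjAlg (Algebra.lmul k (H l₁)) a)
          (T.conjAlg (Algebra.lmul k (H l₂)) a) ρV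
          ((1:H l₁) ⊗ₜ[k] ((1:H l₂) ⊗ₜ[k] v))))
      = T.ydCoassocRHS ρV hb.coactOf l₁ l₂ v := by
    show _ = ((pmapTens ρV.toLinearMap
        (pmapTens (Algebra.lmul k (H l₁)).toLinearMap
          (Algebra.lmul k (H l₂)).toLinearMap)) (T.Φinv a l₁ l₂))
      (((pparam
          ((LinearMap.lTensor (H a) (TensorProduct.comm k (H l₂) (H l₁)).toLinearMap) ∘ₗ
            (TensorProduct.leftComm k (H l₂) (H a) (H l₁)).toLinearMap ∘ₗ
            (TensorProduct.assoc k (H l₂) (H a) (H l₁)).toLinearMap ∘ₗ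
            (TensorProduct.comm k (H l₁) (H l₂ ⊗[k] H a)).toLinearMap)
          (pcomp
            ((LinearMap.llcomp k V V (V ⊗[k] (H l₁ ⊗[k] H l₂))
                ((LinearMap.lTensor V (T.Δ l₁ l₂).toLinearMap) ∘ₗ
                  hb.coactOf (l₁ * l₂))) ∘ₗ
              ρV.toLinearMap)
            (pright V
              (pmapTens ((LinearMap.mul k (H l₁)).flip)
                ((LinearMap.mul k (H l₂)).flip)))))
        (T.Φinv l₁ l₂ a)) v)
    congr 1
    have h1 : T.assocModInv (T.conjAlg (Algebra.lmul k (H l₁)) a)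
        (T.conjAlg (Algebra.lmul k (H l₂)) a) ρV ((1:H l₁) ⊗ₜ[k] ((1:H l₂) ⊗ₜ[k] v))
        = (TensorProduct.assoc k (H l₁) (H l₂) V).symm
            (pmapTens (Algebra.lmul k (H l₁)).toLinearMap
              (pmapTens (Algebra.lmul k (H l₂)).toLinearMap ρV.toLinearMap)
              (T.Φinv l₁ l₂ a) ((1:H l₁) ⊗ₜ[k] ((1:H l₂) ⊗ₜ[k] v))) := by
      show (TensorProduct.assoc k (H l₁) (H l₂) V).symm.toLinearMap
          (pmapTens (T.conjAlg (Algebra.lmul k (H l₁)) a).toLinearMap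
            (pmapTens (T.conjAlg (Algebra.lmul k (H l₂)) a).toLinearMap
              ρV.toLinearMap)
            (T.Φinv (a*l₁*a⁻¹) (a*l₂*a⁻¹) a)
            ((1:H l₁) ⊗ₜ[k] ((1:H l₂) ⊗ₜ[k] v))) = _
      rw [conj_red2]
      rfl
    rw [h1]
    generalize T.Φinv l₁ l₂ a = t
    induction t with
    | zero => simp
    | add t₁ t₂ ht₁ ht₂ =>
        simp only [map_add, LinearMap.add_apply, ht₁, ht₂]
    | tmul x₁ x₂₃ =>
      induction x₂₃ with
      | zero => simp
      | add s₁ s₂ hs₁ hs₂ =>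
          simp only [tmul_add, map_add, LinearMap.add_apply, hs₁, hs₂]
      | tmul x₂ h =>
          simp [pmapTens, pparam, pcomp, pright, TensorProduct.homTensorHomMap_apply,
            TensorProduct.lift.tmul, braid_symm_tens T hb, mul_flip_eq, mulRight_tmul]
          rw [LinearMap.lTensor_comp, LinearMap.comp_apply]
  have hB : (TensorProduct.assoc k V (H l₁) (H l₂))
        ((LinearMap.rTensor (H l₂) (hb.braid l₁ (H l₁)
            (Algebra.lmul k (H l₁))).symm.toLinearMap)
          (T.assocModInv (T.conjAlg (Algebra.lmul k (H l₁)) a) ρV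
            (Algebra.lmul k (H l₂))
            ((LinearMap.lTensor (H l₁) (hb.braid l₂ (H l₂)
                (Algebra.lmul k (H l₂))).symm.toLinearMap)
              ((1:H l₁) ⊗ₜ[k] ((1:H l₂) ⊗ₜ[k] v)))))
      = T.ydCoassocLHS ρV hb.coactOf l₁ l₂ v := by
    have h0 : (LinearMap.lTensor (H l₁) (hb.braid l₂ (H l₂)
          (Algebra.lmul k (H l₂))).symm.toLinearMap)
          ((1:H l₁) ⊗ₜ[k] ((1:H l₂) ⊗ₜ[k] v))
        = (1:H l₁) ⊗ₜ[k] (hb.coactOf l₂ v) := by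
      simp [HalfBraiding.coactOf]
    rw [h0]
    have h1 : T.assocModInv (T.conjAlg (Algebra.lmul k (H l₁)) a) ρV
        (Algebra.lmul k (H l₂)) ((1:H l₁) ⊗ₜ[k] (hb.coactOf l₂ v))
        = (TensorProduct.assoc k (H l₁) V (H l₂)).symm
            (pmapTens (Algebra.lmul k (H l₁)).toLinearMap
              (pmapTens ρV.toLinearMap (Algebra.lmul k (H l₂)).toLinearMap)
              (T.Φinv l₁ a l₂) ((1:H l₁) ⊗ₜ[k] (hb.coactOf l₂ v))) := by
      show (TensorProduct.assoc k (H l₁) V (H l₂)).symm.toLinearMap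
          (pmapTens (T.conjAlg (Algebra.lmul k (H l₁)) a).toLinearMap
            (pmapTens ρV.toLinearMap (Algebra.lmul k (H l₂)).toLinearMap)
            (T.Φinv (a*l₁*a⁻¹) a l₂) ((1:H l₁) ⊗ₜ[k] (hb.coactOf l₂ v))) = _
      rw [conj_red1]
      rfl
    rw [h1]
    show _ = (TensorProduct.assoc k V (H l₁) (H l₂)).toLinearMap
        ((pparam
          ((TensorProduct.assoc k (H a) (H l₁) (H l₂)).symm.toLinearMap ∘ₗ
            (TensorProduct.leftComm k (H l₁) (H a) (H l₂)).toLinearMap)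
          (pmapTens
            (pcomp ((LinearMap.llcomp k V V (V ⊗[k] H l₁) (hb.coactOf l₁)) ∘ₗ
                ρV.toLinearMap)
              (pright V ((LinearMap.mul k (H l₁)).flip)))
            (LinearMap.mul k (H l₂))))
          (T.Φinv l₁ a l₂) (hb.coactOf l₂ v))
    generalize hb.coactOf l₂ v = z
    generalize T.Φinv l₁ a l₂ = t
    induction t with
    | zero => simp
    | add t₁ t₂ ht₁ ht₂ =>
        simp only [map_add, LinearMap.add_apply, ht₁, ht₂]
    | tmul y₁ y₂₃ =>
      induction y₂₃ with
      | zero => simp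
      | add s₁ s₂ hs₁ hs₂ =>
          simp only [tmul_add, map_add, LinearMap.add_apply, hs₁, hs₂]
      | tmul y₂ y₃ =>
        induction z with
        | zero => simp
        | add z₁ z₂ hz₁ hz₂ =>
            simp only [tmul_add, map_add, LinearMap.add_apply, hz₁, hz₂]
        | tmul v' s =>
          simp [pmapTens, pparam, pcomp, pright, TensorProduct.homTensorHomMap_apply,
            TensorProduct.lift.tmul, braid_symm_reg T hb, mul_flip_eq]
  rw [hA, hB] at key
  exact key.symm

end Statements
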